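/- Let G = (N, M_0, F) be a bounded plant with final set F, and let B be a CI-BRG of G with respect to basis partition (T_E, T_I) (T_I non-conflicting and non-increasing, T_I-induced subnet acyclic). Then G is non-blocking (every marking reachable from M_0 can reach some final marking) if and only if for every basis marking M_b of B there exists a basis marking M_b' accessible from M_b in B with R_I(M_b') ∩ F ≠ ∅. -/

import Mathlib

/-- A Petri net with `m` places and `n` transitions. -/
structure PetriNet (m n : ℕ) where
  Pre : Fin m → Fin n → ℕ
  Post : Fin m → Fin n → ℕ

namespace PetriNet

variable {m n : ℕ}

/-- Incidence matrix `C = Post - Pre`. -/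
def C (N : PetriNet m n) (p : Fin m) (t : Fin n) : ℤ :=
  (N.Post p t : ℤ) - (N.Pre p t : ℤ)

/-- Transition `t` is enabled at marking `M`. -/
def enabled (N : PetriNet m n) (M : Fin m → ℕ) (t : Fin n) : Prop :=
  ∀ p, N.Pre p t ≤ M p

/-- Firing transition `t` at marking `M`. -/
def fire (N : PetriNet m n) (M : Fin m → ℕ) (t : Fin n) : Fin m → ℕ :=
  fun p => M p + N.Post p t - N.Pre p t

/-- `fires N M σ M'` : the sequence `σ` is firable at `M` and yields `M'`. -/
inductive fires (N : PetriNet m n) : (Fin m → ℕ) → List (Fin n) → (Fin m → ℕ) → Prop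
  | nil (M : Fin m → ℕ) : fires N M [] M
  | cons {M M' : Fin m → ℕ} {t : Fin n} {σ : List (Fin n)} :
      N.enabled M t → fires N (N.fire M t) σ M' → fires N M (t :: σ) M'

/-- Firing vector of a sequence. -/
def fvec (σ : List (Fin n)) : Fin n → ℕ := fun t => σ.count t

/-- Arcs of the subnet induced by transition set `TI` (full net for `TI = Set.univ`). -/
def arc (N : PetriNet m n) (TI : Set (Fin n)) :
    (Fin m ⊕ Fin n) → (Fin m ⊕ Fin n) → Prop
  | Sum.inl p, Sum.inr t => t ∈ TI ∧ 0 < N.Pre p t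
  | Sum.inr t, Sum.inl p => t ∈ TI ∧ 0 < N.Post p t
  | _, _ => False

/-- The subnet induced by `TI` is acyclic: no directed cycle. -/
def SubnetAcyclic (N : PetriNet m n) (TI : Set (Fin n)) : Prop :=
  ∀ x, ¬ Relation.TransGen (N.arc TI) x x

/-- Transitions in structural conflict. -/
def Tconf (N : PetriNet m n) : Set (Fin n) :=
  {t | ∃ p, 0 < N.Pre p t ∧ ∃ t', t' ≠ t ∧ 0 < N.Pre p t'}

/-- `TI` is non-conflicting: `TI ⊆ T \ T_conf`. -/
def NonConflicting (N : PetriNet m n) (TI : Set (Fin n)) : Prop :=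
  ∀ t ∈ TI, t ∉ N.Tconf

/-- `TI` is non-increasing w.r.t. the GMEC weight vector `w`. -/
def NonIncreasing (N : PetriNet m n) (w : Fin m → ℤ) (TI : Set (Fin n)) : Prop :=
  ∀ t ∈ TI, ∑ p, w p * N.C p t ≤ 0

/-- The `TI`-induced subnet is conflict-free: every place has at most one
output transition among `TI`. -/
def ConflictFreeSubnet (N : PetriNet m n) (TI : Set (Fin n)) : Prop :=
  ∀ p : Fin m, ∀ t ∈ TI, ∀ t' ∈ TI, 0 < N.Pre p t → 0 < N.Pre p t' → t = t'

/-- `σ` consists only of transitions in `TI`. -/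
def ImplicitSeq (TI : Set (Fin n)) (σ : List (Fin n)) : Prop := ∀ t ∈ σ, t ∈ TI

/-- Implicit reach of a marking `Mb`. -/
def RI (N : PetriNet m n) (TI : Set (Fin n)) (Mb : Fin m → ℕ) : Set (Fin m → ℕ) :=
  {M | ∃ σ, ImplicitSeq TI σ ∧ N.fires Mb σ M}

/-- Reachability set. -/
def Reach (N : PetriNet m n) (M0 : Fin m → ℕ) : Set (Fin m → ℕ) :=
  {M | ∃ σ, N.fires M0 σ M}

/-- State equation `M' = M + C·y` (the nonnegativity `M' ≥ 0` is implicit in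
`M' : Fin m → ℕ`). -/
def stateEq (N : PetriNet m n) (M : Fin m → ℕ) (y : Fin n → ℕ) (M' : Fin m → ℕ) : Prop :=
  ∀ p, (M' p : ℤ) = (M p : ℤ) + ∑ t, N.C p t * (y t : ℤ)

/-- `σ` is an explanation of `t` at `M`: an implicit sequence after which `t`
is enabled. -/
def IsExplanation (N : PetriNet m n) (TI : Set (Fin n)) (M : Fin m → ℕ)
    (t : Fin n) (σ : List (Fin n)) : Prop :=
  ImplicitSeq TI σ ∧ ∃ M', N.fires M σ M' ∧ N.enabled M' t

/-- `y` is a minimal explanation vector of `t` at `M`. -/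
def MinExplVec (N : PetriNet m n) (TI : Set (Fin n)) (M : Fin m → ℕ)
    (t : Fin n) (y : Fin n → ℕ) : Prop :=
  (∃ σ, N.IsExplanation TI M t σ ∧ fvec σ = y) ∧
    ∀ σ', N.IsExplanation TI M t σ' → ¬ fvec σ' < y

/-- `y` is the firing vector of some implicit sequence firable at `M`. -/
def FirableVec (N : PetriNet m n) (TI : Set (Fin n)) (M : Fin m → ℕ)
    (y : Fin n → ℕ) : Prop :=
  ∃ σ M', ImplicitSeq TI σ ∧ fvec σ = y ∧ N.fires M σ M'

/-- `y` is a maximal implicit firing vector at `M`. -/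
def MaximalIFV (N : PetriNet m n) (TI : Set (Fin n)) (M : Fin m → ℕ)
    (y : Fin n → ℕ) : Prop :=
  N.FirableVec TI M y ∧ ∀ y', N.FirableVec TI M y' → ¬ y < y'

/-- `y` is the maximal implicit firing vector at `M`, dominating all others. -/
def GreatestIFV (N : PetriNet m n) (TI : Set (Fin n)) (M : Fin m → ℕ)
    (y : Fin n → ℕ) : Prop :=
  N.FirableVec TI M y ∧ ∀ y', N.FirableVec TI M y' → y' ≤ y

/-- One step of the BRG: fire a minimal explanation followed by an explicit
transition `t ∉ TI`. -/
def BRGstep (N : PetriNet m n) (TI : Set (Fin n)) (M1 M2 : Fin m → ℕ) : Prop :=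
  ∃ t ∉ TI, ∃ y, N.MinExplVec TI M1 t y ∧
    ∀ p, (M2 p : ℤ) = (M1 p : ℤ) + (∑ s, N.C p s * (y s : ℤ)) + N.C p t

/-- `Mb` is a basis marking of the BRG with initial marking `M0`. -/
def Basis (N : PetriNet m n) (TI : Set (Fin n)) (M0 Mb : Fin m → ℕ) : Prop :=
  Relation.ReflTransGen (N.BRGstep TI) M0 Mb

/-- A marking is dead if it enables no transition. -/
def Dead (N : PetriNet m n) (M : Fin m → ℕ) : Prop := ∀ t, ¬ N.enabled M t

/-- Final markings of the GMEC `(w, k)`. -/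
def Final (w : Fin m → ℤ) (k : ℤ) (M : Fin m → ℕ) : Prop :=
  ∑ p, w p * (M p : ℤ) ≤ k

/-- The plant is non-blocking. -/
def NonBlocking (N : PetriNet m n) (M0 : Fin m → ℕ) (w : Fin m → ℤ) (k : ℤ) : Prop :=
  ∀ M ∈ N.Reach M0, ∃ M' ∈ N.Reach M, Final w k M'

/-- Boundedness of the marked net. -/
def Bounded (N : PetriNet m n) (M0 : Fin m → ℕ) : Prop :=
  ∃ K, ∀ M ∈ N.Reach M0, ∀ p, M p ≤ K

end PetriNet

open PetriNet
namespace PetriNet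

variable {m n : ℕ}

lemma fires_join {N : PetriNet m n} {M M' M'' : Fin m → ℕ} {σ τ : List (Fin n)}
    (h1 : N.fires M σ M') (h2 : N.fires M' τ M'') : N.fires M (σ ++ τ) M'' := by
  induction h1 with
  | nil M => exact h2
  | cons he _ ih => exact .cons he (ih h2)

lemma fires_split {N : PetriNet m n} :
    ∀ {σ : List (Fin n)} {M M'' : Fin m → ℕ} {τ : List (Fin n)},
      N.fires M (σ ++ τ) M'' → ∃ M', N.fires M σ M' ∧ N.fires M' τ M'' := by
  intro σ
  induction σ with
  | nil => intro M M'' τ h; exact ⟨M, .nil M, h⟩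
  | cons t σ ih =>
    intro M M'' τ h
    cases h with
    | cons he h =>
      obtain ⟨M', h1, h2⟩ := ih h
      exact ⟨M', .cons he h1, h2⟩

lemma fvec_cons (t : Fin n) (σ : List (Fin n)) :
    ∀ s, fvec (t :: σ) s = fvec σ s + if s = t then 1 else 0 := by
  intro s
  by_cases h : s = t
  · subst h; simp [fvec, List.count_cons_self]
  · simp [fvec, List.count_cons_of_ne (Ne.symm h), h]

lemma fvec_append (σ τ : List (Fin n)) :
    ∀ s, fvec (σ ++ τ) s = fvec σ s + fvec τ s := by
  intro s; simp [fvec, List.count_append]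

lemma length_eq_sum (σ : List (Fin n)) : σ.length = ∑ t, fvec σ t := by
  induction σ with
  | nil => simp [fvec]
  | cons t σ ih =>
    simp only [List.length_cons, ih]
    rw [Finset.sum_congr rfl (fun s _ => fvec_cons t σ s)]
    simp [Finset.sum_add_distrib]

lemma enabled_fire_int {N : PetriNet m n} {M : Fin m → ℕ} {t : Fin n}
    (h : N.enabled M t) (p : Fin m) :
    ((N.fire M t) p : ℤ) = (M p : ℤ) + N.C p t := by
  have h1 := h p
  simp only [fire, C]
  omega

lemma fires_stateEq {N : PetriNet m n} {M M' : Fin m → ℕ} {σ : List (Fin n)}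
    (h : N.fires M σ M') (p : Fin m) :
    (M' p : ℤ) = M p + ∑ t, N.C p t * fvec σ t := by
  induction h with
  | nil M => simp [fvec]
  | @cons M M' t σ he hf ih =>
    rw [ih, enabled_fire_int he p]
    simp only [fvec_cons]
    push_cast
    simp only [mul_add, Finset.sum_add_distrib, mul_ite, mul_one, mul_zero]
    rw [Finset.sum_ite_eq' Finset.univ t]
    simp
    ring

lemma marking_ext {M M' : Fin m → ℕ} (h : ∀ p, (M p : ℤ) = M' p) : M = M' :=
  funext fun p => Nat.cast_injective (h p)

end PetriNet
namespace PetriNet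

variable {m n : ℕ}

lemma diamond {N : PetriNet m n} {TI : Set (Fin n)} (hnc : N.NonConflicting TI)
    {M : Fin m → ℕ} {u v : Fin n}
    (hti : u ∈ TI ∨ v ∈ TI) (hne : u ≠ v)
    (hu : N.enabled M u) (hv : N.enabled M v) :
    N.enabled (N.fire M u) v ∧ N.enabled (N.fire M v) u ∧
      N.fire (N.fire M u) v = N.fire (N.fire M v) u := by
  have key : ∀ p, N.Pre p u = 0 ∨ N.Pre p v = 0 := by
    intro p
    by_contra hc
    push_neg at hc
    rcases hti with h | h
    · exact hnc u h ⟨p, Nat.pos_of_ne_zero hc.1, v, hne.symm, Nat.pos_of_ne_zero hc.2⟩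
    · exact hnc v h ⟨p, Nat.pos_of_ne_zero hc.2, u, hne, Nat.pos_of_ne_zero hc.1⟩
  refine ⟨?_, ?_, ?_⟩
  · intro p; have h1 := hu p; have h2 := hv p; have h3 := key p
    simp only [fire]; omega
  · intro p; have h1 := hu p; have h2 := hv p; have h3 := key p
    simp only [fire]; omega
  · funext p; have h1 := hu p; have h2 := hv p; have h3 := key p
    simp only [fire]; omega

lemma commute {N : PetriNet m n} {TI : Set (Fin n)} (hnc : N.NonConflicting TI) {x : Fin n} :
    ∀ {σ : List (Fin n)} {M Mσ : Fin m → ℕ},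
    (∀ v ∈ σ, v ≠ x ∧ (x ∈ TI ∨ v ∈ TI)) → N.enabled M x → N.fires M σ Mσ →
    N.enabled Mσ x ∧ N.fires (N.fire M x) σ (N.fire Mσ x) := by
  intro σ
  induction σ with
  | nil =>
    intro M Mσ _ hx h
    cases h with | nil => exact ⟨hx, .nil _⟩
  | cons v σ ih =>
    intro M Mσ hh hx h
    cases h with
    | cons hv hrest =>
      obtain ⟨hvx, hti⟩ := hh v List.mem_cons_self
      obtain ⟨hxv, hvx', hcomm⟩ := diamond hnc hti (fun e => hvx e.symm) hx hv
      obtain ⟨hend, hfs⟩ := ih (fun s hs => hh s (List.mem_cons_of_mem v hs)) hvx' hrest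
      refine ⟨hend, .cons hxv ?_⟩
      rw [hcomm]
      exact hfs

lemma move_front {N : PetriNet m n} {TI : Set (Fin n)} (hnc : N.NonConflicting TI)
    {u : Fin n} (hu : u ∈ TI) :
    ∀ {σ : List (Fin n)} {M M1 : Fin m → ℕ},
    N.enabled M u → N.fires M σ M1 → u ∈ σ →
    ∃ σ', N.fires (N.fire M u) σ' M1 ∧
      (∀ s, fvec σ' s = fvec σ s - if s = u then 1 else 0) ∧
      ∀ s ∈ σ', s ∈ σ := by
  intro σ
  induction σ with
  | nil => intro M M1 _ _ hmem; exact absurd hmem List.not_mem_nil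
  | cons v σ ih =>
    intro M M1 henu h hmem
    cases h with
    | cons hv hrest =>
      by_cases hvu : v = u
      · subst hvu
        refine ⟨σ, hrest, fun s => ?_, fun s hs => List.mem_cons_of_mem v hs⟩
        rw [fvec_cons]
        by_cases hsv : s = v <;> simp [hsv]
      · have hmem' : u ∈ σ := by
          cases hmem with
          | head => exact absurd rfl hvu
          | tail _ h => exact h
        obtain ⟨hfu_v, hfv_u, hcomm⟩ :=
          diamond hnc (Or.inl hu) (fun e => hvu e.symm) henu hv
        obtain ⟨σ', hfs, hcnt, hsub⟩ := ih hfv_u hrest hmem'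
        refine ⟨v :: σ', ?_, fun s => ?_, fun s hs => ?_⟩
        · refine .cons hfu_v ?_
          rw [hcomm]; exact hfs
        · rw [fvec_cons, fvec_cons, hcnt s]
          have : u ≠ v := fun e => hvu e.symm
          by_cases hsv : s = v <;> by_cases hsu : s = u <;>
            simp_all <;> omega
        · cases hs with
          | head => exact List.mem_cons_self
          | tail _ h => exact List.mem_cons_of_mem v (hsub s h)

lemma keller {N : PetriNet m n} {TI : Set (Fin n)} (hnc : N.NonConflicting TI) :
    ∀ {τ : List (Fin n)}, ImplicitSeq TI τ →
    ∀ {σ : List (Fin n)} {M Mτ Mσ : Fin m → ℕ},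
    N.fires M τ Mτ → N.fires M σ Mσ →
    ∃ ρ M'', N.fires Mτ ρ M'' ∧ (∀ s, fvec ρ s = fvec σ s - fvec τ s) ∧
      (∀ s ∈ ρ, s ∈ σ) ∧ ((∀ s, fvec τ s ≤ fvec σ s) → M'' = Mσ) := by
  intro τ
  induction τ with
  | nil =>
    intro _ σ M Mτ Mσ hτ hσ
    cases hτ with
    | nil => exact ⟨σ, Mσ, hσ, fun s => by simp [fvec], fun s hs => hs, fun _ => rfl⟩
  | cons u τ ih =>
    intro himp σ M Mτ Mσ hτ hσ
    cases hτ with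
    | cons hu hrest =>
      have huTI : u ∈ TI := himp u List.mem_cons_self
      have himp' : ImplicitSeq TI τ := fun s hs => himp s (List.mem_cons_of_mem u hs)
      by_cases humem : u ∈ σ
      · obtain ⟨σ', hfs, hcnt, hsub⟩ := move_front hnc huTI hu hσ humem
        obtain ⟨ρ, M'', hρ, hρcnt, hρsub, hend⟩ := ih himp' hrest hfs
        refine ⟨ρ, M'', hρ, fun s => ?_, fun s hs => hsub s (hρsub s hs), fun hle => ?_⟩
        · rw [hρcnt s, hcnt s, fvec_cons]
          by_cases hsu : s = u <;> simp [hsu] <;> omega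
        · apply hend
          intro s
          have h1 := hcnt s
          have h2 := hle s
          rw [fvec_cons] at h2
          have h3 : 0 < fvec σ u := List.count_pos_iff.mpr humem
          by_cases hsu : s = u <;> simp [hsu] at h1 h2 ⊢ <;> omega
      · have hall : ∀ v ∈ σ, v ≠ u ∧ (u ∈ TI ∨ v ∈ TI) :=
          fun v hv => ⟨fun e => humem (e ▸ hv), Or.inl huTI⟩
        obtain ⟨_, hfs⟩ := commute hnc hall hu hσ
        obtain ⟨ρ, M'', hρ, hρcnt, hρsub, hend⟩ := ih himp' hrest hfs
        have hcnt0 : fvec σ u = 0 := by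
          simp [fvec, List.count_eq_zero_of_not_mem humem]
        refine ⟨ρ, M'', hρ, fun s => ?_, hρsub, fun hle => ?_⟩
        · rw [hρcnt s, fvec_cons]
          by_cases hsu : s = u <;> simp [hsu] <;> omega
        · exfalso
          have := hle u
          rw [fvec_cons] at this
          simp at this
          omega
  
end PetriNet
namespace PetriNet

variable {m n : ℕ}

lemma sum_lt_of_lt {y z : Fin n → ℕ} (h : y < z) : ∑ t, y t < ∑ t, z t := by
  rw [Pi.lt_def] at h
  obtain ⟨hle, i, hi⟩ := h
  exact Finset.sum_lt_sum (fun j _ => hle j) ⟨i, Finset.mem_univ i, hi⟩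

lemma exists_minExpl {N : PetriNet m n} {TI : Set (Fin n)} {M : Fin m → ℕ} {t : Fin n}
    {α : List (Fin n)} (hα : N.IsExplanation TI M t α) :
    ∃ y σy, N.MinExplVec TI M t y ∧ N.IsExplanation TI M t σy ∧ fvec σy = y ∧
      ∀ s, y s ≤ fvec α s := by
  classical
  set P : ℕ → Prop := fun c => ∃ σ, N.IsExplanation TI M t σ ∧
    (∀ s, fvec σ s ≤ fvec α s) ∧ (∑ s, fvec σ s) = c with hP
  have hPex : ∃ c, P c := ⟨∑ s, fvec α s, α, hα, fun s => le_refl _, rfl⟩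
  obtain ⟨σy, hσy, hσle, hσsum⟩ := Nat.find_spec hPex
  refine ⟨fvec σy, σy, ⟨⟨σy, hσy, rfl⟩, ?_⟩, hσy, rfl, hσle⟩
  intro σ' hσ' hlt
  have hle' : ∀ s, fvec σ' s ≤ fvec α s := fun s => le_trans (hlt.le s) (hσle s)
  have : P (∑ s, fvec σ' s) := ⟨σ', hσ', hle', rfl⟩
  have hlt2 : ∑ s, fvec σ' s < Nat.find hPex := hσsum ▸ sum_lt_of_lt hlt
  exact Nat.find_min hPex hlt2 this

lemma split_explicit {TI : Set (Fin n)} :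
    ∀ {σ : List (Fin n)}, ¬ (∀ t ∈ σ, t ∈ TI) →
    ∃ α t β, σ = α ++ t :: β ∧ ImplicitSeq TI α ∧ t ∉ TI := by
  intro σ
  induction σ with
  | nil => intro h; exact absurd (fun t ht => absurd ht List.not_mem_nil) h
  | cons a σ ih =>
    intro h
    by_cases ha : a ∈ TI
    · have h' : ¬ (∀ t ∈ σ, t ∈ TI) := by
        intro hh
        exact h (fun t ht => by
          cases ht with
          | head => exact ha
          | tail _ h2 => exact hh t h2)
      obtain ⟨α, t, β, heq, himp, ht⟩ := ih h'
      refine ⟨a :: α, t, β, by rw [heq]; rfl, ?_, ht⟩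
      intro s hs
      cases hs with
      | head => exact ha
      | tail _ h2 => exact himp s h2
    · exact ⟨[], a, σ, rfl, fun s hs => absurd hs List.not_mem_nil, ha⟩

lemma complete {N : PetriNet m n} {TI : Set (Fin n)} (hnc : N.NonConflicting TI) :
    ∀ L : ℕ, ∀ {σ : List (Fin n)} {M M' : Fin m → ℕ}, σ.length ≤ L → N.fires M σ M' →
    ∃ Mb, Relation.ReflTransGen (N.BRGstep TI) M Mb ∧ M' ∈ N.RI TI Mb := by
  intro L
  induction L with
  | zero =>
    intro σ M M' hlen h
    have : σ = [] := List.length_eq_zero_iff.mp (Nat.le_zero.mp hlen)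
    subst this
    cases h with
    | nil => exact ⟨M, .refl, [], fun s hs => absurd hs List.not_mem_nil, .nil M⟩
  | succ L ih =>
    intro σ M M' hlen h
    by_cases himp : ∀ s ∈ σ, s ∈ TI
    · exact ⟨M, .refl, σ, himp, h⟩
    · obtain ⟨α, t, β, heq, hαimp, ht⟩ := split_explicit himp
      subst heq
      obtain ⟨M1, hfα, hftβ⟩ := fires_split h
      cases hftβ with
      | cons hent hfβ =>
        have hαexpl : N.IsExplanation TI M t α := ⟨hαimp, M1, hfα, hent⟩
        obtain ⟨y, σy, hmin, ⟨hσyimp, My, hfy, henty⟩, hfvy, hyle⟩ := exists_minExpl hαexpl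
        obtain ⟨ρ, M'', hfρ, hρcnt, hρsub, hend⟩ := keller hnc hσyimp hfy hfα
        have hM'' : M'' = M1 := hend (fun s => by rw [hfvy]; exact hyle s)
        subst hM''
        have hρimp : ImplicitSeq TI ρ := fun s hs => hαimp s (hρsub s hs)
        have hallρ : ∀ v ∈ ρ, v ≠ t ∧ (t ∈ TI ∨ v ∈ TI) :=
          fun v hv => ⟨fun e => ht (e ▸ hρimp v hv), Or.inr (hρimp v hv)⟩
        obtain ⟨_, hfρ'⟩ := commute hnc hallρ henty hfρ
        have hstep : N.BRGstep TI M (N.fire My t) := by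
          refine ⟨t, ht, y, hmin, fun p => ?_⟩
          rw [enabled_fire_int henty p, fires_stateEq hfy p, hfvy]
        have hfnew : N.fires (N.fire My t) (ρ ++ β) M' := fires_join hfρ' hfβ
        have hlρ : ρ.length ≤ α.length := by
          rw [length_eq_sum, length_eq_sum]
          exact Finset.sum_le_sum (fun s _ => by rw [hρcnt s]; omega)
        have hlen' : (ρ ++ β).length ≤ L := by
          have h1 : (α ++ t :: β).length = α.length + 1 + β.length := by
            simp [List.length_append]; omega
          simp only [List.length_append] at *
          omega
        obtain ⟨Mb, hacc, hRI⟩ := ih hlen' hfnew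
        exact ⟨Mb, .head hstep hacc, hRI⟩

lemma brgstep_reach {N : PetriNet m n} {TI : Set (Fin n)} {M1 M2 : Fin m → ℕ}
    (h : N.BRGstep TI M1 M2) : ∃ σ, N.fires M1 σ M2 := by
  obtain ⟨t, ht, y, ⟨⟨σy, ⟨hσyimp, My, hfy, henty⟩, hfvy⟩, _⟩, heq⟩ := h
  have hM2 : M2 = N.fire My t := by
    apply marking_ext
    intro p
    rw [heq p, enabled_fire_int henty p, fires_stateEq hfy p, hfvy]
  subst hM2
  exact ⟨σy ++ [t], fires_join hfy (.cons henty (.nil _))⟩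

lemma basis_reach {N : PetriNet m n} {TI : Set (Fin n)} {M0 Mb : Fin m → ℕ}
    (h : Relation.ReflTransGen (N.BRGstep TI) M0 Mb) : ∃ σ, N.fires M0 σ Mb := by
  induction h with
  | refl => exact ⟨[], .nil _⟩
  | tail _ hstep ih =>
    obtain ⟨σ, hσ⟩ := ih
    obtain ⟨τ, hτ⟩ := brgstep_reach hstep
    exact ⟨σ ++ τ, fires_join hσ hτ⟩

end PetriNet
namespace PetriNet

variable {m n : ℕ}

lemma step_track {N : PetriNet m n} {TI : Set (Fin n)} (hnc : N.NonConflicting TI)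
    {Mb M Mb2 : Fin m → ℕ}
    (hM : M ∈ N.RI TI Mb) (hstep : N.BRGstep TI Mb Mb2) :
    ∃ M2, M2 ∈ N.RI TI Mb2 ∧ ∃ δ, N.fires M δ M2 := by
  obtain ⟨τ, hτimp, hfτ⟩ := hM
  obtain ⟨t, ht, y, ⟨⟨σy, ⟨hσyimp, My, hfy, henty⟩, hfvy⟩, _⟩, heq⟩ := hstep
  have hMb2 : Mb2 = N.fire My t := marking_ext fun p => by
    rw [heq p, enabled_fire_int henty p, fires_stateEq hfy p, hfvy]
  subst hMb2
  obtain ⟨ρ, M₁, hfρ, hρcnt, hρsub, _⟩ := keller hnc hτimp hfτ hfy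
  obtain ⟨ρ2, M₁', hfρ2, hρ2cnt, hρ2sub, _⟩ := keller hnc hσyimp hfy hfτ
  have hρ2imp : ImplicitSeq TI ρ2 := fun s hs => hτimp s (hρ2sub s hs)
  have hfc1 : N.fires Mb (τ ++ ρ) M₁ := fires_join hfτ hfρ
  have hfc2 : N.fires Mb (σy ++ ρ2) M₁' := fires_join hfy hfρ2
  have hM1eq : M₁ = M₁' := by
    apply marking_ext; intro p
    rw [fires_stateEq hfc1 p, fires_stateEq hfc2 p]
    congr 1
    apply Finset.sum_congr rfl
    intro s _
    have h3 : fvec (τ ++ ρ) s = fvec (σy ++ ρ2) s := by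
      rw [fvec_append, fvec_append]
      have h1 := hρcnt s; have h2 := hρ2cnt s
      omega
    rw [h3]
  have hall : ∀ v ∈ ρ2, v ≠ t ∧ (t ∈ TI ∨ v ∈ TI) :=
    fun v hv => ⟨fun e => ht (e ▸ hρ2imp v hv), Or.inr (hρ2imp v hv)⟩
  obtain ⟨hent', hfρ2'⟩ := commute hnc hall henty hfρ2
  refine ⟨N.fire M₁' t, ⟨ρ2, hρ2imp, hfρ2'⟩, ρ ++ [t], ?_⟩
  exact fires_join (hM1eq ▸ hfρ) (.cons hent' (.nil _))

lemma track {N : PetriNet m n} {TI : Set (Fin n)} (hnc : N.NonConflicting TI)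
    {Mb M Mb' : Fin m → ℕ}
    (hM : M ∈ N.RI TI Mb) (h : Relation.ReflTransGen (N.BRGstep TI) Mb Mb') :
    ∃ M2, M2 ∈ N.RI TI Mb' ∧ ∃ δ, N.fires M δ M2 := by
  induction h with
  | refl => exact ⟨M, hM, [], .nil M⟩
  | tail _ hstep ih =>
    obtain ⟨M2, hRI, δ, hδ⟩ := ih
    obtain ⟨M3, hRI3, δ2, hδ2⟩ := step_track hnc hRI hstep
    exact ⟨M3, hRI3, δ ++ δ2, fires_join hδ hδ2⟩

lemma final_confluence {N : PetriNet m n} {TI : Set (Fin n)} {w : Fin m → ℤ} {k : ℤ}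
    (hnc : N.NonConflicting TI) (hni : N.NonIncreasing w TI)
    {Mb' M2 Mf : Fin m → ℕ} (h2 : M2 ∈ N.RI TI Mb') (hf : Mf ∈ N.RI TI Mb')
    (hfin : Final w k Mf) : ∃ M'', (∃ δ, N.fires M2 δ M'') ∧ Final w k M'' := by
  obtain ⟨τ, hτimp, hfτ⟩ := h2
  obtain ⟨σf, hσimp, hfσ⟩ := hf
  obtain ⟨ρ, M'', hfρ, hρcnt, hρsub, _⟩ := keller hnc hτimp hfτ hfσ
  refine ⟨M'', ⟨ρ, hfρ⟩, ?_⟩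
  have hfc : N.fires Mb' (τ ++ ρ) M'' := fires_join hfτ hfρ
  set e : Fin n → ℕ := fun s => fvec τ s - fvec σf s with he
  have hcnt : ∀ s, fvec (τ ++ ρ) s = fvec σf s + e s := by
    intro s
    rw [fvec_append]
    have h1 := hρcnt s
    simp only [he]
    omega
  have hM'' : ∀ p, (M'' p : ℤ) = Mf p + ∑ s, N.C p s * e s := by
    intro p
    rw [fires_stateEq hfc p, fires_stateEq hfσ p]
    simp only [hcnt]
    push_cast
    simp only [mul_add, Finset.sum_add_distrib]
    ring
  show ∑ p, w p * (M'' p : ℤ) ≤ k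
  calc ∑ p, w p * (M'' p : ℤ)
      = ∑ p, w p * ((Mf p : ℤ) + ∑ s, N.C p s * e s) :=
        Finset.sum_congr rfl fun p _ => by rw [hM'' p]
    _ = (∑ p, w p * (Mf p : ℤ)) + ∑ s, (∑ p, w p * N.C p s) * (e s : ℤ) := by
        simp only [mul_add, Finset.sum_add_distrib, Finset.mul_sum, Finset.sum_mul]
        congr 1
        rw [Finset.sum_comm]
        exact Finset.sum_congr rfl fun s _ => Finset.sum_congr rfl fun p _ => by ring
    _ ≤ (∑ p, w p * (Mf p : ℤ)) + 0 := by
        apply add_le_add_right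
        apply Finset.sum_nonpos
        intro s _
        by_cases hes : e s = 0
        · simp [hes]
        · have hpos : 0 < fvec τ s := by simp only [he] at hes; omega
          have hsτ : s ∈ τ := by
            have : 0 < τ.count s := hpos
            exact List.count_pos_iff.mp this
          exact mul_nonpos_of_nonpos_of_nonneg (hni s (hτimp s hsτ)) (by positivity)
    _ ≤ k := by simpa [Final] using hfin

end PetriNet
open PetriNet

/-- main theorem: a bounded plant is non-blocking iff every
basis marking of the CI-BRG can access a basis marking whose implicit reach
contains a final marking. -/
theorem nonblocking_iff_cibrg {m n : ℕ} (N : PetriNet m n) (TI : Set (Fin n))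
    (M0 : Fin m → ℕ) (w : Fin m → ℤ) (k : ℤ)
    (hb : N.Bounded M0)
    (hacyc : N.SubnetAcyclic TI) (hnc : N.NonConflicting TI)
    (hni : N.NonIncreasing w TI) :
    N.NonBlocking M0 w k ↔
      ∀ Mb, N.Basis TI M0 Mb →
        ∃ Mb', Relation.ReflTransGen (N.BRGstep TI) Mb Mb' ∧
          ∃ M ∈ N.RI TI Mb', Final w k M := by
  constructor
  · intro hnb Mb hbasis
    obtain ⟨σ0, hσ0⟩ := basis_reach hbasis
    have hMbR : Mb ∈ N.Reach M0 := ⟨σ0, hσ0⟩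
    obtain ⟨Mf, ⟨σf, hσf⟩, hfin⟩ := hnb Mb hMbR
    obtain ⟨Mb', hacc, hRI⟩ := complete hnc σf.length (le_refl _) hσf
    exact ⟨Mb', hacc, Mf, hRI, hfin⟩
  · intro hrhs M hM
    obtain ⟨σ, hσ⟩ := hM
    obtain ⟨Mb, hbasis, hMRI⟩ := complete hnc σ.length (le_refl _) hσ
    obtain ⟨Mb', hacc, Mf, hMfRI, hfin⟩ := hrhs Mb hbasis
    obtain ⟨M2, hM2RI, δ, hδ⟩ := track hnc hMRI hacc
    obtain ⟨M'', ⟨δ2, hδ2⟩, hfin''⟩ := final_confluence hnc hni hM2RI hMfRI hfin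
    exact ⟨M'', ⟨δ ++ δ2, fires_join hδ hδ2⟩, hfin''⟩
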